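/- Let F be a finite field with q = |F| ≥ 3 elements. The set of all affine lines of the plane F² — i.e., all sets of the form {p + t·d : t ∈ F} with p ∈ F² and d ∈ F² \ {0}, each of which is a q-element subset of the q²-element set F² — is a resolving set for the Kneser graph K(q², q) on the point set F². Consequently β(K(q²,q)) ≤ q² + q. -/

import Mathlib

/-- The Kneser graph `K(n,k)` on a ground set `X`: vertices are the `k`-element
subsets of `X`, two vertices adjacent iff the corresponding subsets are disjoint. -/
def kneserGraphOn (X : Type*) [DecidableEq X] (k : ℕ) :
    SimpleGraph {s : Finset X // s.card = k} where
  Adj U W := U ≠ W ∧ Disjoint U.1 W.1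
  symm := by
    constructor
    intro U W h
    exact ⟨h.1.symm, h.2.symm⟩
  loopless := by
    constructor
    intro U h
    exact h.1 rfl

/-- A set `S` of vertices is a resolving set for `G` if every pair of distinct
vertices is resolved by some vertex of `S`, i.e. is at different distances from it. -/
def resolvingSet {V : Type*} (G : SimpleGraph V) (S : Set V) : Prop :=
  ∀ u v : V, u ≠ v → ∃ x ∈ S, G.dist u x ≠ G.dist v x

/-- The metric dimension `β(G)`: the minimum cardinality of a resolving set for `G`. -/
noncomputable def metricDim {V : Type*} (G : SimpleGraph V) : ℕ :=
  sInf {m | ∃ S : Finset V, resolvingSet G ↑S ∧ S.card = m}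

section Aux

variable {F : Type*} [Field F] [Fintype F] [DecidableEq F]

/-- The affine line through `p` with direction `d`. -/
def lineF (p d : F × F) : Finset (F × F) :=
  Finset.image (fun t : F => p + t • d) Finset.univ

lemma lineF_card (p : F × F) {d : F × F} (hd : d ≠ 0) :
    (lineF p d).card = Fintype.card F := by
  rw [lineF, Finset.card_image_of_injective _ ?_, Finset.card_univ]
  intro a b h
  have h' : (a - b) • d = 0 := by
    have h2 := add_left_cancel h
    rw [sub_smul, h2, sub_self]
  rcases smul_eq_zero.mp h' with h'' | h''
  · exact sub_eq_zero.mp h''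
  · exact absurd h'' hd

lemma self_mem_lineF (p d : F × F) : p ∈ lineF p d := by
  simp only [lineF, Finset.mem_image]
  exact ⟨0, Finset.mem_univ _, by simp⟩

lemma lineF_add_smul (p d : F × F) (s : F) : lineF (p + s • d) d = lineF p d := by
  ext y
  simp only [lineF, Finset.mem_image, Finset.mem_univ, true_and]
  constructor
  · rintro ⟨t, rfl⟩
    exact ⟨s + t, by rw [add_smul, add_assoc]⟩
  · rintro ⟨t, rfl⟩
    exact ⟨t - s, by rw [sub_smul, add_assoc, add_sub_cancel]⟩

/-- Canonical representatives of directions. -/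
def canonF (d : F × F) : F × F := if d.1 = 0 then (0, 1) else (1, d.2 / d.1)

/-- The set of canonical directions. -/
def canonDirs (F : Type*) [Field F] [Fintype F] [DecidableEq F] : Finset (F × F) :=
  insert (0, 1) (Finset.univ.image fun m : F => ((1 : F), m))

lemma canonDirs_card : (canonDirs F).card = Fintype.card F + 1 := by
  rw [canonDirs, Finset.card_insert_of_notMem, Finset.card_image_of_injective,
    Finset.card_univ]
  · intro a b h
    exact (Prod.ext_iff.mp h).2
  · simp only [Finset.mem_image]
    rintro ⟨m, -, h⟩
    exact one_ne_zero ((Prod.ext_iff.mp h).1)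

lemma canonF_mem (d : F × F) : canonF d ∈ canonDirs F := by
  rw [canonF, canonDirs]
  split
  · exact Finset.mem_insert_self _ _
  · exact Finset.mem_insert_of_mem (Finset.mem_image.mpr ⟨_, Finset.mem_univ _, rfl⟩)

lemma canonF_of_mem {e : F × F} (he : e ∈ canonDirs F) : canonF e = e := by
  rw [canonDirs, Finset.mem_insert, Finset.mem_image] at he
  rcases he with rfl | ⟨m, -, rfl⟩
  · simp [canonF]
  · simp [canonF]

lemma canonDirs_ne_zero {e : F × F} (he : e ∈ canonDirs F) : e ≠ 0 := by
  rw [canonDirs, Finset.mem_insert, Finset.mem_image] at he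
  rcases he with rfl | ⟨m, -, rfl⟩
  · simp [Prod.ext_iff]
  · simp [Prod.ext_iff]

lemma canonF_smul {t : F} (ht : t ≠ 0) (d : F × F) : canonF (t • d) = canonF d := by
  rcases d with ⟨a, b⟩
  simp only [canonF, Prod.smul_mk, smul_eq_mul, mul_eq_zero]
  by_cases ha : a = 0
  · simp [ha]
  · simp only [ha, ht, or_self, if_false]
    rw [mul_div_mul_left _ _ ht]

/-- Through any point outside a set of size `q` there is a line (with canonical
direction) disjoint from the set. -/
lemma exists_line_avoiding (U : Finset (F × F)) (hU : U.card = Fintype.card F)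
    (x : F × F) (hx : x ∉ U) :
    ∃ e ∈ canonDirs F, Disjoint (lineF x e) U := by
  set D := U.image (fun u => canonF (u - x)) with hD
  have hcard : D.card < (canonDirs F).card := by
    rw [canonDirs_card]
    exact lt_of_le_of_lt (le_trans Finset.card_image_le hU.le) (Nat.lt_succ_self _)
  have hne : (canonDirs F \ D).Nonempty := by
    rw [← Finset.card_pos]
    have := Finset.le_card_sdiff D (canonDirs F)
    omega
  obtain ⟨e, he⟩ := hne
  rw [Finset.mem_sdiff] at he
  refine ⟨e, he.1, ?_⟩
  rw [Finset.disjoint_left]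
  intro y hy hyU
  apply he.2
  rw [lineF, Finset.mem_image] at hy
  obtain ⟨t, -, rfl⟩ := hy
  have ht : t ≠ 0 := by
    rintro rfl
    simp only [zero_smul, add_zero] at hyU
    exact hx hyU
  rw [hD, Finset.mem_image]
  exact ⟨x + t • e, hyU, by
    rw [add_sub_cancel_left, canonF_smul ht, canonF_of_mem he.1]⟩

/-- A parametrization (with `q² + q` parameters) covering all affine lines with
canonical direction. -/
def lineParam (F : Type*) [Field F] [Fintype F] [DecidableEq F] :
    (F × F) ⊕ F → {s : Finset (F × F) // s.card = Fintype.card F} :=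
  Sum.elim
    (fun bm => ⟨lineF ((0 : F), bm.2) (1, bm.1), lineF_card _ (by simp [Prod.ext_iff])⟩)
    (fun a => ⟨lineF (a, (0 : F)) ((0 : F), 1), lineF_card _ (by simp [Prod.ext_iff])⟩)

lemma lineVert_mem_image (x : F × F) {e : F × F} (he : e ∈ canonDirs F) :
    (⟨lineF x e, lineF_card x (canonDirs_ne_zero he)⟩ :
      {s : Finset (F × F) // s.card = Fintype.card F}) ∈
      Finset.image (lineParam F) Finset.univ := by
  rw [Finset.mem_image]
  rw [canonDirs, Finset.mem_insert, Finset.mem_image] at he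
  rcases he with rfl | ⟨m, -, rfl⟩
  · refine ⟨Sum.inr x.1, Finset.mem_univ _, ?_⟩
    apply Subtype.ext
    show lineF (x.1, (0 : F)) ((0 : F), 1) = lineF x ((0 : F), 1)
    have hx : x = (x.1, (0 : F)) + x.2 • ((0 : F), 1) := by
      simp [Prod.ext_iff]
    conv_rhs => rw [hx]
    rw [lineF_add_smul]
  · refine ⟨Sum.inl (m, x.2 - x.1 * m), Finset.mem_univ _, ?_⟩
    apply Subtype.ext
    show lineF ((0 : F), x.2 - x.1 * m) ((1 : F), m) = lineF x ((1 : F), m)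
    have hx : x = ((0 : F), x.2 - x.1 * m) + x.1 • ((1 : F), m) := by
      simp [Prod.ext_iff]
    conv_rhs => rw [hx]
    rw [lineF_add_smul]

end Aux

/-- For a finite field `F` with `q = |F| ≥ 3` elements, the set of all affine lines of
the plane `F²` is a resolving set for the Kneser graph `K(q², q)` on the point set
`F²`; consequently `β(K(q²,q)) ≤ q² + q`. -/
theorem affine_plane_resolving_kneser
    (F : Type*) [Field F] [Fintype F] [DecidableEq F]
    (hq : 3 ≤ Fintype.card F) :
    resolvingSet (kneserGraphOn (F × F) (Fintype.card F))
      {X | ∃ p d : F × F, d ≠ 0 ∧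
        X.1 = Finset.image (fun t : F => p + t • d) Finset.univ} ∧
    metricDim (kneserGraphOn (F × F) (Fintype.card F)) ≤
      Fintype.card F ^ 2 + Fintype.card F := by
  classical
  set G := kneserGraphOn (F × F) (Fintype.card F) with hG
  set S : Finset {s : Finset (F × F) // s.card = Fintype.card F} :=
    Finset.image (lineParam F) Finset.univ with hS
  have key : ∀ u v : {s : Finset (F × F) // s.card = Fintype.card F}, u ≠ v →
      ∃ x ∈ S, G.dist u x ≠ G.dist v x := by
    intro u v huv
    have hsub : ¬ v.1 ⊆ u.1 := by
      intro h
      exact huv (Subtype.ext (Finset.eq_of_subset_of_card_le h (by rw [u.2, v.2])).symm)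
    obtain ⟨x, hxv, hxu⟩ := Finset.not_subset.mp hsub
    obtain ⟨e, heC, hdisj⟩ := exists_line_avoiding u.1 u.2 x hxu
    set L : {s : Finset (F × F) // s.card = Fintype.card F} :=
      ⟨lineF x e, lineF_card x (canonDirs_ne_zero heC)⟩ with hL
    refine ⟨L, lineVert_mem_image x heC, ?_⟩
    have hadj : G.Adj u L := by
      refine ⟨?_, hdisj.symm⟩
      intro h
      apply hxu
      rw [h]
      exact self_mem_lineF x e
    have h1 : G.dist u L = 1 := SimpleGraph.dist_eq_one_iff_adj.mpr hadj
    have h2 : G.dist v L ≠ 1 := by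
      intro h
      rw [SimpleGraph.dist_eq_one_iff_adj] at h
      have hadj' : v ≠ L ∧ Disjoint v.1 L.1 := h
      exact Finset.disjoint_left.mp hadj'.2 hxv (self_mem_lineF x e)
    omega
  constructor
  · intro u v huv
    obtain ⟨x, hxS, hx⟩ := key u v huv
    refine ⟨x, ?_, hx⟩
    obtain ⟨i, -, rfl⟩ := Finset.mem_image.mp hxS
    cases i with
    | inl bm => exact ⟨((0 : F), bm.2), (1, bm.1), by simp [Prod.ext_iff], rfl⟩
    | inr a => exact ⟨(a, (0 : F)), ((0 : F), 1), by simp [Prod.ext_iff], rfl⟩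
  · have hres : resolvingSet G ↑S := fun u v h => key u v h
    have hmem : S.card ∈
        {m | ∃ S' : Finset {s : Finset (F × F) // s.card = Fintype.card F},
          resolvingSet G ↑S' ∧ S'.card = m} := ⟨S, hres, rfl⟩
    calc metricDim G ≤ S.card := Nat.sInf_le hmem
      _ ≤ Fintype.card ((F × F) ⊕ F) := le_trans Finset.card_image_le Finset.card_univ.le
      _ = Fintype.card F ^ 2 + Fintype.card F := by
          simp [Fintype.card_sum, Fintype.card_prod, sq]
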